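/- For the transport solution operator A_μ on L²([x_L,x_R]; σ_T dx) given by A_μ(φ)(x) = (1/μ) ∫_{x_L}^x exp(-(1/μ)∫_y^x σ_T(z)dz) σ_r(y)φ(y) dy with μ > 0, the derivative in μ satisfies the operator norm bound ‖∂_μ A_μ‖ ≤ (1/μ)(1 + ‖σ_T/σ_r‖_∞). -/

import Mathlib

open MeasureTheory intervalIntegral Real

theorem my_cs {a b : ℝ} (hab : a ≤ b) {f g : ℝ → ℝ}
    (hf : ContinuousOn f (Set.Icc a b)) (hg : ContinuousOn g (Set.Icc a b)) :
    (∫ y in a..b, f y * g y) ^ 2 ≤ (∫ y in a..b, f y ^ 2) * ∫ y in a..b, g y ^ 2 := by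
  have huicc : Set.uIcc a b = Set.Icc a b := Set.uIcc_of_le hab
  have hif : IntervalIntegrable f volume a b :=
    (hf.mono huicc.le).intervalIntegrable
  have hig : IntervalIntegrable g volume a b :=
    (hg.mono huicc.le).intervalIntegrable
  have hif2 : IntervalIntegrable (fun y => f y ^ 2) volume a b :=
    ((hf.pow 2).mono huicc.le).intervalIntegrable
  have hig2 : IntervalIntegrable (fun y => g y ^ 2) volume a b :=
    ((hg.pow 2).mono huicc.le).intervalIntegrable
  have hifg : IntervalIntegrable (fun y => f y * g y) volume a b :=
    ((hf.mul hg).mono huicc.le).intervalIntegrable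
  set A := ∫ y in a..b, f y ^ 2
  set B := ∫ y in a..b, f y * g y
  set C := ∫ y in a..b, g y ^ 2
  have key : ∀ t : ℝ, 0 ≤ A * (t * t) + (2 * B) * t + C := by
    intro t
    have h0 : 0 ≤ ∫ y in a..b, (t * f y + g y) ^ 2 :=
      intervalIntegral.integral_nonneg hab (fun y _ => sq_nonneg _)
    have hexp : (∫ y in a..b, (t * f y + g y) ^ 2)
        = A * (t * t) + (2 * B) * t + C := by
      have : ∀ y, (t * f y + g y) ^ 2
          = (t * t) * f y ^ 2 + ((2 * t) * (f y * g y) + g y ^ 2) := by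
        intro y; ring
      rw [intervalIntegral.integral_congr (fun y _ => this y)]
      rw [intervalIntegral.integral_add (hif2.const_mul _)
        ((hifg.const_mul _).add hig2),
        intervalIntegral.integral_add (hifg.const_mul _) hig2,
        intervalIntegral.integral_const_mul, intervalIntegral.integral_const_mul]
      ring
    linarith [hexp ▸ h0]
  have hd := discrim_le_zero key
  rw [discrim] at hd
  nlinarith [hd]

theorem kernel_mass {σT : ℝ → ℝ} (hσT : Continuous σT) {xL x c : ℝ} (hc : 0 < c) :
    (∫ y in xL..x, σT y *
      Real.exp (((∫ z in xL..y, σT z) - ∫ z in xL..x, σT z) / c))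
      ≤ c := by
  set T : ℝ → ℝ := fun u => ∫ z in xL..u, σT z with hT
  have hTd : ∀ y : ℝ, HasDerivAt T (σT y) y := fun y =>
    (hσT.integral_hasStrictDerivAt xL y).hasDerivAt
  have hTc : Continuous T := continuous_iff_continuousAt.2 fun y => (hTd y).continuousAt
  have hGd : ∀ y : ℝ, HasDerivAt (fun u => c * Real.exp ((T u - T x) / c))
      (σT y * Real.exp ((T y - T x) / c)) y := by
    intro y
    have h1 : HasDerivAt (fun u => (T u - T x) / c) (σT y / c) y :=
      ((hTd y).sub_const _).div_const c
    have h2 := (h1.exp).const_mul c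
    convert h2 using 1
    · rfl
    · rfl
    field_simp
  have hint : IntervalIntegrable
      (fun y => σT y * Real.exp ((T y - T x) / c)) volume xL x :=
    (hσT.mul (((hTc.sub continuous_const).div_const c).rexp)).intervalIntegrable _ _
  have heq : (∫ y in xL..x, σT y * Real.exp ((T y - T x) / c))
      = c * Real.exp ((T x - T x) / c) - c * Real.exp ((T xL - T x) / c) :=
    intervalIntegral.integral_eq_sub_of_hasDerivAt (fun y _ => hGd y) hint
  rw [heq]
  have h3 : Real.exp ((T x - T x) / c) = 1 := by simp
  rw [h3]
  nlinarith [Real.exp_pos ((T xL - T x) / c), hc.le]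

theorem weighted_H {σT σr q : ℝ → ℝ} (hσT : Continuous σT) (hσr : Continuous σr)
    (hq : Continuous q) (hq0 : ∀ y, 0 ≤ q y) (hrT : ∀ y, σr y * q y ≤ σT y * q y)
    {xL xR c : ℝ} (hc : 0 < c) (hab : xL ≤ xR) (hσr0 : ∀ y, 0 ≤ σr y) :
    (∫ x in xL..xR, σT x * (Real.exp (-(∫ z in xL..x, σT z) / c) *
        ∫ y in xL..x, Real.exp ((∫ z in xL..y, σT z) / c) * (σr y * q y)))
      ≤ c * ∫ x in xL..xR, σT x * q x := by
  set T : ℝ → ℝ := fun u => ∫ z in xL..u, σT z with hT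
  have hTd : ∀ y : ℝ, HasDerivAt T (σT y) y := fun y =>
    (hσT.integral_hasStrictDerivAt xL y).hasDerivAt
  have hTc : Continuous T := continuous_iff_continuousAt.2 fun y => (hTd y).continuousAt
  set R : ℝ → ℝ := fun u => ∫ y in xL..u, Real.exp (T y / c) * (σr y * q y) with hR
  have hRd : ∀ y : ℝ, HasDerivAt R (Real.exp (T y / c) * (σr y * q y)) y := fun y =>
    (((hTc.div_const c).rexp.mul (hσr.mul hq)).integral_hasStrictDerivAt xL y).hasDerivAt
  have hRc : Continuous R := continuous_iff_continuousAt.2 fun y => (hRd y).continuousAt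
  set H : ℝ → ℝ := fun u => Real.exp (-(T u) / c) * R u with hH
  have hHc : Continuous H := ((hTc.neg.div_const c).rexp).mul hRc
  have hHd : ∀ x : ℝ, HasDerivAt H (σr x * q x - (σT x / c) * H x) x := by
    intro x
    have h1 : HasDerivAt (fun u => Real.exp (-(T u) / c))
        (-(σT x) / c * Real.exp (-(T x) / c)) x := by
      have := (((hTd x).neg).div_const c).exp
      simpa [mul_comm] using this
    have h2 := h1.mul (hRd x)
    convert h2 using 1
    · rfl
    · rfl
    · rfl
    have e1 : Real.exp (-(T x) / c) * Real.exp (T x / c) = 1 := by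
      rw [← Real.exp_add]; rw [show -(T x) / c + T x / c = 0 by ring, Real.exp_zero]
    simp only [hH]
    linear_combination (-(σr x * q x)) * e1
  -- pointwise: σT x * H x = c * (σr x * q x - deriv)
  have hkey : ∀ x, σT x * H x = c * (σr x * q x) - c * (σr x * q x - (σT x / c) * H x) := by
    intro x; field_simp; ring
  have hint1 : IntervalIntegrable (fun x => σr x * q x) volume xL xR :=
    (hσr.mul hq).intervalIntegrable _ _
  have hint2 : IntervalIntegrable (fun x => σr x * q x - (σT x / c) * H x) volume xL xR :=
    ((hσr.mul hq).sub ((hσT.div_const c).mul hHc)).intervalIntegrable _ _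
  have heq : (∫ x in xL..xR, σT x * H x)
      = c * (∫ x in xL..xR, σr x * q x)
        - c * ∫ x in xL..xR, (σr x * q x - (σT x / c) * H x) := by
    rw [intervalIntegral.integral_congr (fun x _ => hkey x),
      intervalIntegral.integral_sub (hint1.const_mul c) (hint2.const_mul c),
      intervalIntegral.integral_const_mul, intervalIntegral.integral_const_mul]
  have hftc : (∫ x in xL..xR, (σr x * q x - (σT x / c) * H x)) = H xR - H xL :=
    intervalIntegral.integral_eq_sub_of_hasDerivAt (fun x _ => hHd x) hint2
  have hHxL : H xL = 0 := by simp [hH, hR]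
  have hHxR : 0 ≤ H xR := by
    apply mul_nonneg (Real.exp_pos _).le
    exact intervalIntegral.integral_nonneg hab fun y _ =>
      mul_nonneg (Real.exp_pos _).le (mul_nonneg (hσr0 y) (hq0 y))
  have hmono : (∫ x in xL..xR, σr x * q x) ≤ ∫ x in xL..xR, σT x * q x := by
    apply intervalIntegral.integral_mono_on hab hint1
      ((hσT.mul hq).intervalIntegrable _ _)
    exact fun x _ => hrT x
  calc (∫ x in xL..xR, σT x * (Real.exp (-(T x) / c) * R x))
      = c * (∫ x in xL..xR, σr x * q x) - c * (H xR - H xL) := by rw [← hftc, ← heq]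
    _ ≤ c * (∫ x in xL..xR, σr x * q x) := by nlinarith
    _ ≤ c * ∫ x in xL..xR, σT x * q x := by nlinarith

theorem abs_sub_one_le_exp_half {t : ℝ} (ht : 0 ≤ t) : |t - 1| ≤ Real.exp (t / 2) := by
  have h1 : (1 : ℝ) ≤ Real.exp (t / 2) := Real.one_le_exp (by linarith)
  have h2 := Real.add_one_le_exp (t / 4)
  have h3 : (1 + t / 4) ^ 2 ≤ Real.exp (t / 2) := by
    have : Real.exp (t / 2) = Real.exp (t / 4) * Real.exp (t / 4) := by
      rw [← Real.exp_add]; ring_nf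
    nlinarith [Real.exp_pos (t / 4)]
  rcases abs_cases (t - 1) with ⟨h, _⟩ | ⟨h, _⟩ <;> rw [h] <;> nlinarith [sq_nonneg (t/4 - 1)]

theorem deriv_formula {σT σr φ : ℝ → ℝ} (hσT : Continuous σT) (hσr : Continuous σr)
    (hφ : Continuous φ) (hσT0 : ∀ t, 0 ≤ σT t) {xL x μ : ℝ} (hμ : 0 < μ) (hxL : xL ≤ x) :
    HasDerivAt (fun ν => (1 / ν) * ∫ y in xL..x,
        Real.exp (-(1 / ν) * ∫ z in y..x, σT z) * (σr y * φ y))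
      ((1 / μ ^ 2) * ∫ y in xL..x,
        Real.exp (-(1 / μ) * ∫ z in y..x, σT z) *
          ((1 / μ) * (∫ z in y..x, σT z) - 1) * (σr y * φ y)) μ := by
  set S : ℝ → ℝ := fun y => ∫ z in y..x, σT z with hS
  have hSeq : S = fun y => -(∫ z in x..y, σT z) := by
    funext y; rw [hS]; exact intervalIntegral.integral_symm x y
  have hSc : Continuous S := by
    rw [hSeq]
    exact (continuous_iff_continuousAt.2 fun y =>
      ((hσT.integral_hasStrictDerivAt x y).hasDerivAt).continuousAt).neg
  have hS0 : ∀ y ∈ Set.Ioc xL x, 0 ≤ S y := fun y hy =>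
    intervalIntegral.integral_nonneg hy.2 (fun z _ => hσT0 z)
  have hc : Continuous (fun y => σr y * φ y) := hσr.mul hφ
  have hI : HasDerivAt (fun ν => ∫ y in xL..x,
        Real.exp (-(1 / ν) * S y) * (σr y * φ y))
      (∫ y in xL..x, Real.exp (-(1 / μ) * S y) * (S y / μ ^ 2) * (σr y * φ y)) μ := by
    have hball : ∀ ν ∈ Metric.ball μ (μ / 2), 0 < ν ∧ μ / 2 < ν := by
      intro ν hν
      rw [Metric.mem_ball, Real.dist_eq, abs_lt] at hν
      constructor <;> linarith
    refine (intervalIntegral.hasDerivAt_integral_of_dominated_loc_of_deriv_le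
      (F := fun ν y => Real.exp (-(1 / ν) * S y) * (σr y * φ y))
      (F' := fun ν y => Real.exp (-(1 / ν) * S y) * (S y / ν ^ 2) * (σr y * φ y))
      (bound := fun y => (4 / μ ^ 2) * (|S y| * |σr y * φ y|))
      (Metric.ball_mem_nhds μ (half_pos hμ)) ?_ ?_ ?_ ?_ ?_ ?_).2
    · filter_upwards with ν
      exact (((continuous_const.mul hSc).rexp).mul hc).aestronglyMeasurable.restrict
    · exact (((continuous_const.mul hSc).rexp).mul hc).intervalIntegrable _ _
    · exact ((((continuous_const.mul hSc).rexp).mul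
        (hSc.div_const _)).mul hc).aestronglyMeasurable.restrict
    · filter_upwards with y hy ν hν
      rw [Set.uIoc_of_le hxL] at hy
      obtain ⟨hν0, hν1⟩ := hball ν hν
      have hSy := hS0 y hy
      have he : Real.exp (-(1 / ν) * S y) ≤ 1 := by
        rw [Real.exp_le_one_iff]
        have h1ν : 0 < 1 / ν := by positivity
        nlinarith
      have h14 : (1:ℝ) ≤ 4 / μ ^ 2 * ν ^ 2 := by
        rw [div_mul_eq_mul_div, le_div_iff₀ (by positivity)]
        nlinarith
      have h4 : S y / ν ^ 2 ≤ 4 / μ ^ 2 * S y := by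
        rw [div_le_iff₀ (by positivity)]
        nlinarith [mul_le_mul_of_nonneg_left h14 hSy]
      have h5 : Real.exp (-(1 / ν) * S y) * (S y / ν ^ 2) ≤ 4 / μ ^ 2 * S y := by
        calc Real.exp (-(1 / ν) * S y) * (S y / ν ^ 2) ≤ 1 * (S y / ν ^ 2) :=
              mul_le_mul_of_nonneg_right he (by positivity)
          _ = S y / ν ^ 2 := one_mul _
          _ ≤ 4 / μ ^ 2 * S y := h4
      rw [norm_eq_abs]
      calc |Real.exp (-(1 / ν) * S y) * (S y / ν ^ 2) * (σr y * φ y)|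
          = |Real.exp (-(1 / ν) * S y) * (S y / ν ^ 2)| * |σr y * φ y| := abs_mul _ _
        _ ≤ (4 / μ ^ 2 * S y) * |σr y * φ y| := by
            apply mul_le_mul_of_nonneg_right _ (abs_nonneg _)
            rw [abs_of_nonneg (by positivity)]
            exact h5
        _ ≤ 4 / μ ^ 2 * (|S y| * |σr y * φ y|) := by
            rw [abs_of_nonneg hSy]; ring_nf; exact le_refl _
    · exact (continuous_const.mul (hSc.abs.mul hc.abs)).intervalIntegrable _ _
    · filter_upwards with y hy ν hν
      obtain ⟨hν0, hν1⟩ := hball ν hν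
      have hu : HasDerivAt (fun ν : ℝ => -(1 / ν) * S y) (S y / ν ^ 2) ν := by
        simp only [one_div]
        have h2 := ((hasDerivAt_inv (ne_of_gt hν0)).neg).mul_const (S y)
        convert h2 using 1
        · rfl
        · rfl
        · rfl
        field_simp
      exact (hu.exp).mul_const (σr y * φ y)
  have hinv : HasDerivAt (fun ν : ℝ => 1 / ν) (-(1 / μ ^ 2)) μ := by
    simp only [one_div]
    simpa using hasDerivAt_inv (ne_of_gt hμ)
  have hmul := hinv.mul hI
  convert hmul using 1
  · rfl
  · rfl
  · rfl
  have int1 : IntervalIntegrable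
      (fun y => Real.exp (-(1 / μ) * S y) * (σr y * φ y)) volume xL x :=
    (((continuous_const.mul hSc).rexp).mul hc).intervalIntegrable _ _
  have int2 : IntervalIntegrable
      (fun y => Real.exp (-(1 / μ) * S y) * (S y / μ ^ 2) * (σr y * φ y)) volume xL x :=
    ((((continuous_const.mul hSc).rexp).mul (hSc.div_const _)).mul hc).intervalIntegrable _ _
  rw [← intervalIntegral.integral_const_mul, ← intervalIntegral.integral_const_mul,
    ← intervalIntegral.integral_const_mul,
    ← intervalIntegral.integral_add (int1.const_mul _) (int2.const_mul _)]
  apply intervalIntegral.integral_congr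
  intro y _
  have hμ2 : μ ≠ 0 := ne_of_gt hμ
  field_simp
  ring

set_option maxHeartbeats 1000000 in
theorem key_bound {σT σr φ : ℝ → ℝ} (hσT : Continuous σT) (hσr : Continuous σr)
    (hφ : Continuous φ) (hσT0 : ∀ t, 0 ≤ σT t) (hσr0 : ∀ t, 0 ≤ σr t)
    (hrT : ∀ t, σr t ≤ σT t) {xL xR μ : ℝ} (hμ : 0 < μ) (hab : xL ≤ xR)
    (D : ℝ → ℝ)
    (hD : ∀ x ∈ Set.Icc xL xR, D x = (1 / μ ^ 2) * ∫ y in xL..x,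
      Real.exp (-(1 / μ) * ∫ z in y..x, σT z) *
        ((1 / μ) * (∫ z in y..x, σT z) - 1) * (σr y * φ y)) :
    (∫ x in xL..xR, σT x * D x ^ 2) ≤ (4 / μ ^ 2) * ∫ x in xL..xR, σT x * φ x ^ 2 := by
  have hμ' : μ ≠ 0 := ne_of_gt hμ
  set T : ℝ → ℝ := fun u => ∫ z in xL..u, σT z with hT
  have hTd : ∀ y : ℝ, HasDerivAt T (σT y) y := fun y =>
    (hσT.integral_hasStrictDerivAt xL y).hasDerivAt
  have hTc : Continuous T := continuous_iff_continuousAt.2 fun y => (hTd y).continuousAt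
  have hSval : ∀ x y : ℝ, (∫ z in y..x, σT z) = T x - T y := fun x y =>
    (intervalIntegral.integral_interval_sub_left (hσT.intervalIntegrable xL x)
      (hσT.intervalIntegrable xL y)).symm
  have hSnn : ∀ x y : ℝ, y ≤ x → 0 ≤ T x - T y := fun x y hyx => by
    rw [← hSval x y]; exact intervalIntegral.integral_nonneg hyx fun z _ => hσT0 z
  have hc : Continuous fun y => σr y * φ y := hσr.mul hφ
  have hprim : ∀ f : ℝ → ℝ, Continuous f → Continuous (fun u => ∫ y in xL..u, f y) :=
    fun f hf => continuous_iff_continuousAt.2 fun y =>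
      ((hf.integral_hasStrictDerivAt xL y).hasDerivAt).continuousAt
  set P : ℝ → ℝ := fun u => ∫ y in xL..u, Real.exp (T y / μ) * (σr y * φ y) with hP
  set Q : ℝ → ℝ := fun u => ∫ y in xL..u, Real.exp (T y / μ) * T y * (σr y * φ y) with hQ
  have hPc : Continuous P := hprim _ (((hTc.div_const μ).rexp).mul hc)
  have hQc : Continuous Q := hprim _ ((((hTc.div_const μ).rexp).mul hTc).mul hc)
  set E : ℝ → ℝ := fun x => (1 / μ ^ 2) * (Real.exp (-(T x) / μ) *
      (((1 / μ) * T x - 1) * P x - (1 / μ) * Q x)) with hE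
  have hEc : Continuous E := by
    apply continuous_const.mul
    exact ((hTc.neg.div_const μ).rexp).mul
      (((((continuous_const.mul hTc).sub continuous_const)).mul hPc).sub (continuous_const.mul hQc))
  -- E equals the integral form, for every x
  have hEeq : ∀ x : ℝ, (1 / μ ^ 2) * (∫ y in xL..x,
      Real.exp (-(1 / μ) * (T x - T y)) * ((1 / μ) * (T x - T y) - 1) * (σr y * φ y)) = E x := by
    intro x
    have hint : ∀ y : ℝ, Real.exp (-(1 / μ) * (T x - T y)) * ((1 / μ) * (T x - T y) - 1) *
        (σr y * φ y) = Real.exp (-(T x) / μ) *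
          (((1 / μ) * T x - 1) * (Real.exp (T y / μ) * (σr y * φ y)) -
            (1 / μ) * (Real.exp (T y / μ) * T y * (σr y * φ y))) := by
      intro y
      have hsplit : Real.exp (-(1 / μ) * (T x - T y))
          = Real.exp (-(T x) / μ) * Real.exp (T y / μ) := by
        rw [← Real.exp_add]; congr 1; field_simp; ring
      rw [hsplit]; ring
    rw [intervalIntegral.integral_congr (fun y _ => hint y),
      intervalIntegral.integral_const_mul]
    have int1 : IntervalIntegrable
        (fun y => ((1 / μ) * T x - 1) * (Real.exp (T y / μ) * (σr y * φ y))) volume xL x :=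
      (by fun_prop : Continuous fun y => (1 / μ * T x - 1) * (Real.exp (T y / μ) * (σr y * φ y))).intervalIntegrable _ _
    have int2 : IntervalIntegrable
        (fun y => (1 / μ) * (Real.exp (T y / μ) * T y * (σr y * φ y))) volume xL x :=
      (by fun_prop : Continuous fun y => (1 / μ) * (Real.exp (T y / μ) * T y * (σr y * φ y))).intervalIntegrable _ _
    rw [intervalIntegral.integral_sub int1 int2,
      intervalIntegral.integral_const_mul, intervalIntegral.integral_const_mul]
  have hDE : ∀ x ∈ Set.Icc xL xR, D x = E x := by
    intro x hx
    rw [hD x hx, ← hEeq x]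
    congr 1
    apply intervalIntegral.integral_congr
    intro y _
    simp only [hSval]
  set W : ℝ → ℝ := fun x => Real.exp (-(T x) / (2 * μ)) *
      ∫ y in xL..x, Real.exp (T y / (2 * μ)) * (σr y * φ y ^ 2) with hW
  have hWc : Continuous W :=
    ((hTc.neg.div_const _).rexp).mul (hprim _ (((hTc.div_const _).rexp).mul (hσr.mul (hφ.pow 2))))
  -- pointwise bound
  have hpt : ∀ x ∈ Set.Icc xL xR, E x ^ 2 ≤ (2 / μ ^ 3) * W x := by
    intro x hx
    have hx1 : xL ≤ x := hx.1
    set K : ℝ → ℝ := fun y => Real.exp ((T y - T x) / (2 * μ)) with hK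
    have hKc : Continuous K := ((hTc.sub continuous_const).div_const _).rexp
    set I1 : ℝ := ∫ y in xL..x, K y * (σr y * |φ y|) with hI1
    have habs : |E x| ≤ (1 / μ ^ 2) * I1 := by
      rw [← hEeq x, abs_mul, abs_of_nonneg (by positivity : (0:ℝ) ≤ 1 / μ ^ 2)]
      apply mul_le_mul_of_nonneg_left _ (by positivity : (0:ℝ) ≤ 1 / μ ^ 2)
      calc |∫ y in xL..x, Real.exp (-(1 / μ) * (T x - T y)) *
              ((1 / μ) * (T x - T y) - 1) * (σr y * φ y)|
          ≤ ∫ y in xL..x, |Real.exp (-(1 / μ) * (T x - T y)) *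
              ((1 / μ) * (T x - T y) - 1) * (σr y * φ y)| :=
            intervalIntegral.abs_integral_le_integral_abs hx1
        _ ≤ I1 := by
            apply intervalIntegral.integral_mono_on hx1
            · exact (by fun_prop : Continuous fun y => |Real.exp (-(1 / μ) * (T x - T y)) *
                ((1 / μ) * (T x - T y) - 1) * (σr y * φ y)|).intervalIntegrable _ _
            · exact (hKc.mul (hσr.mul hφ.abs)).intervalIntegrable _ _
            · intro y hy
              have ht0 : 0 ≤ (1 / μ) * (T x - T y) := by
                have := hSnn x y hy.2
                positivity
              have h1 : |Real.exp (-(1 / μ) * (T x - T y)) *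
                  ((1 / μ) * (T x - T y) - 1) * (σr y * φ y)|
                  = Real.exp (-(1 / μ) * (T x - T y)) * |(1 / μ) * (T x - T y) - 1| *
                    (σr y * |φ y|) := by
                rw [abs_mul, abs_mul, abs_of_nonneg (Real.exp_pos _).le, abs_mul,
                  abs_of_nonneg (hσr0 y)]
              rw [h1]
              have h2 : |(1 / μ) * (T x - T y) - 1| ≤ Real.exp ((1 / μ) * (T x - T y) / 2) :=
                abs_sub_one_le_exp_half ht0
              have h3 : Real.exp (-(1 / μ) * (T x - T y)) *
                  Real.exp ((1 / μ) * (T x - T y) / 2) = K y := by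
                rw [hK, ← Real.exp_add]; congr 1; field_simp; ring
              calc Real.exp (-(1 / μ) * (T x - T y)) * |(1 / μ) * (T x - T y) - 1| *
                    (σr y * |φ y|)
                  ≤ Real.exp (-(1 / μ) * (T x - T y)) *
                    Real.exp ((1 / μ) * (T x - T y) / 2) * (σr y * |φ y|) := by
                    apply mul_le_mul_of_nonneg_right _
                      (mul_nonneg (hσr0 y) (abs_nonneg _))
                    exact mul_le_mul_of_nonneg_left h2 (Real.exp_pos _).le
                _ = K y * (σr y * |φ y|) := by rw [h3]
    -- Cauchy-Schwarz
    have hcs : I1 ^ 2 ≤ (∫ y in xL..x, K y * σr y) *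
        ∫ y in xL..x, K y * (σr y * φ y ^ 2) := by
      have hfc : ContinuousOn (fun y => Real.sqrt (K y * σr y)) (Set.Icc xL x) :=
        ((hKc.mul hσr).sqrt).continuousOn
      have hgc : ContinuousOn (fun y => Real.sqrt (K y * σr y) * |φ y|) (Set.Icc xL x) :=
        hfc.mul hφ.abs.continuousOn
      have hcs0 := my_cs hx1 hfc hgc
      have hnn : ∀ y, 0 ≤ K y * σr y := fun y =>
        mul_nonneg (Real.exp_pos _).le (hσr0 y)
      have e1 : (∫ y in xL..x, Real.sqrt (K y * σr y) * (Real.sqrt (K y * σr y) * |φ y|))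
          = I1 := by
        apply intervalIntegral.integral_congr; intro y _
        dsimp only
        rw [← mul_assoc, Real.mul_self_sqrt (hnn y)]; ring
      have e2 : (∫ y in xL..x, Real.sqrt (K y * σr y) ^ 2) = ∫ y in xL..x, K y * σr y := by
        apply intervalIntegral.integral_congr; intro y _
        dsimp only
        rw [Real.sq_sqrt (hnn y)]
      have e3 : (∫ y in xL..x, (Real.sqrt (K y * σr y) * |φ y|) ^ 2)
          = ∫ y in xL..x, K y * (σr y * φ y ^ 2) := by
        apply intervalIntegral.integral_congr; intro y _
        dsimp only
        rw [mul_pow, Real.sq_sqrt (hnn y), sq_abs]; ring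
      rw [e1, e2, e3] at hcs0
      exact hcs0
    have hmass : (∫ y in xL..x, K y * σr y) ≤ 2 * μ := by
      have h1 : (∫ y in xL..x, K y * σr y) ≤ ∫ y in xL..x, σT y * K y := by
        apply intervalIntegral.integral_mono_on hx1
          ((hKc.mul hσr).intervalIntegrable _ _)
          ((hσT.mul hKc).intervalIntegrable _ _)
        intro y _
        show K y * σr y ≤ σT y * K y
        rw [mul_comm (σT y) (K y)]
        exact mul_le_mul_of_nonneg_left (hrT y) (Real.exp_pos _).le
      have h2 := kernel_mass hσT (show (0:ℝ) < 2 * μ by positivity) (xL := xL) (x := x)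
      exact le_trans h1 h2
    have hWeq : (∫ y in xL..x, K y * (σr y * φ y ^ 2)) = W x := by
      simp only [hW]
      rw [← intervalIntegral.integral_const_mul]
      apply intervalIntegral.integral_congr; intro y _
      dsimp only
      have hsp : K y = Real.exp (-(T x) / (2 * μ)) * Real.exp (T y / (2 * μ)) := by
        simp only [hK]
        rw [← Real.exp_add]; congr 1; ring
      rw [hsp]; ring
    have hW0 : 0 ≤ W x := by
      rw [← hWeq]
      exact intervalIntegral.integral_nonneg hx1 fun y _ =>
        mul_nonneg (Real.exp_pos _).le (mul_nonneg (hσr0 y) (sq_nonneg _))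
    have hI10 : 0 ≤ I1 := intervalIntegral.integral_nonneg hx1 fun y _ =>
      mul_nonneg (Real.exp_pos _).le (mul_nonneg (hσr0 y) (abs_nonneg _))
    calc E x ^ 2 = |E x| ^ 2 := (sq_abs _).symm
      _ ≤ ((1 / μ ^ 2) * I1) ^ 2 := by
          apply pow_le_pow_left₀ (abs_nonneg _) habs
      _ = (1 / μ ^ 4) * I1 ^ 2 := by ring
      _ ≤ (1 / μ ^ 4) * ((2 * μ) * W x) := by
          apply mul_le_mul_of_nonneg_left _ (by positivity)
          calc I1 ^ 2 ≤ (∫ y in xL..x, K y * σr y) * ∫ y in xL..x, K y * (σr y * φ y ^ 2) :=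
                hcs
            _ = (∫ y in xL..x, K y * σr y) * W x := by rw [hWeq]
            _ ≤ (2 * μ) * W x := mul_le_mul_of_nonneg_right hmass hW0
      _ = (2 / μ ^ 3) * W x := by field_simp
  -- integrate
  have hDint : (∫ x in xL..xR, σT x * D x ^ 2) = ∫ x in xL..xR, σT x * E x ^ 2 := by
    apply intervalIntegral.integral_congr
    intro x hx
    dsimp only
    rw [hDE x (by rwa [Set.uIcc_of_le hab] at hx)]
  have hstep : (∫ x in xL..xR, σT x * E x ^ 2)
      ≤ (2 / μ ^ 3) * ∫ x in xL..xR, σT x * W x := by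
    rw [← intervalIntegral.integral_const_mul]
    apply intervalIntegral.integral_mono_on hab
      ((hσT.mul (hEc.pow 2)).intervalIntegrable _ _)
      ((continuous_const.mul (hσT.mul hWc)).intervalIntegrable _ _)
    intro x hx
    calc σT x * E x ^ 2 ≤ σT x * ((2 / μ ^ 3) * W x) :=
          mul_le_mul_of_nonneg_left (hpt x hx) (hσT0 x)
      _ = (2 / μ ^ 3) * (σT x * W x) := by ring
  have hWH : (∫ x in xL..xR, σT x * W x) ≤ (2 * μ) * ∫ x in xL..xR, σT x * φ x ^ 2 := by
    have := weighted_H hσT hσr (hφ.pow 2) (fun y => sq_nonneg _)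
      (fun y => mul_le_mul_of_nonneg_right (hrT y) (sq_nonneg _))
      (show (0:ℝ) < 2 * μ by positivity) hab hσr0
    exact this
  calc (∫ x in xL..xR, σT x * D x ^ 2) = ∫ x in xL..xR, σT x * E x ^ 2 := hDint
    _ ≤ (2 / μ ^ 3) * ∫ x in xL..xR, σT x * W x := hstep
    _ ≤ (2 / μ ^ 3) * ((2 * μ) * ∫ x in xL..xR, σT x * φ x ^ 2) :=
        mul_le_mul_of_nonneg_left hWH (by positivity)
    _ = (4 / μ ^ 2) * ∫ x in xL..xR, σT x * φ x ^ 2 := by field_simp; ring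

set_option maxHeartbeats 1000000

/-- for the transport solution operator `A_μ` (given pointwise by the
integral formula below), the derivative of `μ ↦ A_μ φ` in `μ` has weighted-`L²`
norm at most `(1/μ)(1 + ‖σ_T/σ_r‖_∞)` times that of `φ`; this is the operator
norm bound `‖∂_μ A_μ‖ ≤ (1/μ)(1 + ‖σ_T/σ_r‖_∞)`. -/
theorem stmt1 (xL xR : ℝ) (hx : xL < xR) (μ : ℝ) (hμ : 0 < μ)
    (σT σr : ℝ → ℝ)
    (hσT : ContinuousOn σT (Set.Icc xL xR))
    (hσr : ContinuousOn σr (Set.Icc xL xR))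
    (hpos : ∀ x ∈ Set.Icc xL xR, 0 < σr x)
    (hle : ∀ x ∈ Set.Icc xL xR, σr x ≤ σT x)
    (M : ℝ) (hM : M = sSup ((fun x => σT x / σr x) '' Set.Icc xL xR))
    (φ : ℝ → ℝ) (hφ : ContinuousOn φ (Set.Icc xL xR))
    (ψ : ℝ → ℝ → ℝ)
    (hψ : ∀ ν > 0, ∀ x ∈ Set.Icc xL xR,
      ψ ν x = (1 / ν) * ∫ y in xL..x,
        Real.exp (-(1 / ν) * ∫ z in y..x, σT z) * (σr y * φ y))
    (dψ : ℝ → ℝ)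
    (hdψ : ∀ x ∈ Set.Icc xL xR, HasDerivAt (fun ν => ψ ν x) (dψ x) μ) :
    Real.sqrt (∫ x in xL..xR, σT x * (dψ x) ^ 2) ≤
      (1 / μ) * (1 + M) * Real.sqrt (∫ x in xL..xR, σT x * (φ x) ^ 2) := by
  have hxle : xL ≤ xR := hx.le
  set c : ℝ → ℝ := fun t => max xL (min t xR) with hcdef
  have hcmem : ∀ t, c t ∈ Set.Icc xL xR := fun t =>
    ⟨le_max_left _ _, max_le hxle (min_le_right _ _)⟩
  have hcid : ∀ t ∈ Set.Icc xL xR, c t = t := fun t ht => by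
    simp only [hcdef]; rw [min_eq_left ht.2, max_eq_right ht.1]
  have hcc : Continuous c := continuous_const.max (continuous_id.min continuous_const)
  set σT' : ℝ → ℝ := fun t => σT (c t) with hσT'def
  set σr' : ℝ → ℝ := fun t => σr (c t) with hσr'def
  set φ' : ℝ → ℝ := fun t => φ (c t) with hφ'def
  have hσT'c : Continuous σT' := hσT.comp_continuous hcc hcmem
  have hσr'c : Continuous σr' := hσr.comp_continuous hcc hcmem
  have hφ'c : Continuous φ' := hφ.comp_continuous hcc hcmem
  have hσr'0 : ∀ t, 0 ≤ σr' t := fun t => (hpos _ (hcmem t)).le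
  have hrT' : ∀ t, σr' t ≤ σT' t := fun t => hle _ (hcmem t)
  have hσT'0 : ∀ t, 0 ≤ σT' t := fun t => le_trans (hσr'0 t) (hrT' t)
  -- agreement of original and clamped data on the interval
  have hsub : ∀ x ∈ Set.Icc xL xR, ∀ y ∈ Set.uIcc xL x, Set.uIcc y x ⊆ Set.Icc xL xR := by
    intro x hxI y hy
    have hxU : x ∈ Set.uIcc xL xR := by rw [Set.uIcc_of_le hxle]; exact hxI
    have hyU : y ∈ Set.uIcc xL xR := Set.uIcc_subset_uIcc Set.left_mem_uIcc hxU hy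
    intro z hz
    rw [← Set.uIcc_of_le hxle]
    exact Set.uIcc_subset_uIcc hyU hxU hz
  have hform : ∀ x ∈ Set.Icc xL xR, ∀ ν : ℝ,
      (∫ y in xL..x, Real.exp (-(1 / ν) * ∫ z in y..x, σT z) * (σr y * φ y))
        = ∫ y in xL..x, Real.exp (-(1 / ν) * ∫ z in y..x, σT' z) * (σr' y * φ' y) := by
    intro x hxI ν
    apply intervalIntegral.integral_congr
    intro y hy
    have hyI : y ∈ Set.Icc xL xR := hsub x hxI y hy Set.left_mem_uIcc
    have hinner : (∫ z in y..x, σT z) = ∫ z in y..x, σT' z := by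
      apply intervalIntegral.integral_congr
      intro z hz
      have hzI : z ∈ Set.Icc xL xR := hsub x hxI y hy hz
      simp only [hσT'def]; rw [hcid z hzI]
    dsimp only
    rw [hinner]
    simp only [hσr'def, hφ'def]
    rw [hcid y hyI]
  have hDval : ∀ x ∈ Set.Icc xL xR, dψ x = (1 / μ ^ 2) * ∫ y in xL..x,
      Real.exp (-(1 / μ) * ∫ z in y..x, σT' z) *
        ((1 / μ) * (∫ z in y..x, σT' z) - 1) * (σr' y * φ' y) := by
    intro x hxI
    have hder := deriv_formula hσT'c hσr'c hφ'c hσT'0 hμ hxI.1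
    have hev : (fun ν => ψ ν x) =ᶠ[nhds μ] (fun ν => (1 / ν) * ∫ y in xL..x,
        Real.exp (-(1 / ν) * ∫ z in y..x, σT' z) * (σr' y * φ' y)) := by
      filter_upwards [Ioi_mem_nhds hμ] with ν hν
      rw [hψ ν hν x hxI, hform x hxI ν]
    exact (hdψ x hxI).unique (hder.congr_of_eventuallyEq hev)
  have hkey := key_bound hσT'c hσr'c hφ'c hσT'0 hσr'0 hrT' hμ hxle dψ hDval
  have hL : (∫ x in xL..xR, σT x * dψ x ^ 2) = ∫ x in xL..xR, σT' x * dψ x ^ 2 := by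
    apply intervalIntegral.integral_congr
    intro t ht
    have htI : t ∈ Set.Icc xL xR := by rwa [Set.uIcc_of_le hxle] at ht
    dsimp only
    simp only [hσT'def]
    rw [hcid t htI]
  have hR : (∫ x in xL..xR, σT x * φ x ^ 2) = ∫ x in xL..xR, σT' x * φ' x ^ 2 := by
    apply intervalIntegral.integral_congr
    intro t ht
    have htI : t ∈ Set.Icc xL xR := by rwa [Set.uIcc_of_le hxle] at ht
    dsimp only
    simp only [hσT'def, hφ'def]
    rw [hcid t htI]
  have hM1 : (1:ℝ) ≤ M := by
    have hbdd : BddAbove ((fun x => σT x / σr x) '' Set.Icc xL xR) :=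
      (isCompact_Icc.image_of_continuousOn
        (hσT.div hσr fun t ht => ne_of_gt (hpos t ht))).bddAbove
    have hmem : σT xL / σr xL ∈ (fun x => σT x / σr x) '' Set.Icc xL xR :=
      ⟨xL, Set.left_mem_Icc.2 hxle, rfl⟩
    have h1 : (1:ℝ) ≤ σT xL / σr xL :=
      (one_le_div (hpos xL (Set.left_mem_Icc.2 hxle))).2 (hle xL (Set.left_mem_Icc.2 hxle))
    rw [hM]
    exact le_trans h1 (le_csSup hbdd hmem)
  rw [hL, hR]
  calc Real.sqrt (∫ x in xL..xR, σT' x * dψ x ^ 2)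
      ≤ Real.sqrt ((4 / μ ^ 2) * ∫ x in xL..xR, σT' x * φ' x ^ 2) :=
        Real.sqrt_le_sqrt hkey
    _ = (2 / μ) * Real.sqrt (∫ x in xL..xR, σT' x * φ' x ^ 2) := by
        rw [show (4 / μ ^ 2 : ℝ) = (2 / μ) ^ 2 by ring, Real.sqrt_mul (by positivity) _,
          Real.sqrt_sq (by positivity)]
    _ ≤ (1 / μ) * (1 + M) * Real.sqrt (∫ x in xL..xR, σT' x * φ' x ^ 2) := by
        apply mul_le_mul_of_nonneg_right _ (Real.sqrt_nonneg _)
        have h2M : (2:ℝ) ≤ 1 + M := by linarith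
        calc (2:ℝ) / μ = (1 / μ) * 2 := by ring
          _ ≤ (1 / μ) * (1 + M) := mul_le_mul_of_nonneg_left h2M (by positivity)
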